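/- arXiv:1408.6405 — 2 statements merged into one kernel-verified Lean document; each statement's English description precedes it below -/
import Mathlib

section
/- Let k be even, n a multiple of k, and f a homogeneous skew-symmetric polynomial in k variables of degree strictly less than (k/2)(n-1). Then the hyperpfaffian Pf(f(x_S))_{S ∈ binom([n],k)} of order n is the zero polynomial. -/
open Finset Equiv MvPolynomial

open scoped Classical

noncomputable section

/-- The position of the `j`-th element of the `i`-th block. -/
def bpos (m k : ℕ) (i : Fin m) (j : Fin k) : Fin (m * k) :=
  ⟨k * (i : ℕ) + (j : ℕ), by
    have hi := i.isLt
    have hj := j.isLt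
    calc k * (i : ℕ) + (j : ℕ) < k * (i : ℕ) + k := by omega
      _ = k * ((i : ℕ) + 1) := by ring
      _ ≤ k * m := Nat.mul_le_mul_left k hi
      _ = m * k := Nat.mul_comm k m⟩

/-- Each block of the (oriented) partition is listed in increasing order. -/
def IsBlockMono (m k : ℕ) (π : Equiv.Perm (Fin (m * k))) : Prop :=
  ∀ i : Fin m, StrictMono fun j : Fin k => π (bpos m k i j)

/-- The blocks are listed in increasing order of their first elements. -/
def IsLeadMono (m k : ℕ) (π : Equiv.Perm (Fin (m * k))) : Prop :=
  ∀ (i i' : Fin m) (j : Fin k), i < i' →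
    π (bpos m k i ⟨0, j.pos⟩) < π (bpos m k i' ⟨0, j.pos⟩)

/-- Canonical representative of a set partition of `[n]`, `n = m*k`, into `m` blocks of
size `k`: each block increasing and blocks ordered by their minima. -/
def IsPartRep (m k : ℕ) (π : Equiv.Perm (Fin (m * k))) : Prop :=
  IsBlockMono m k π ∧ IsLeadMono m k π

/-- A `k`-ary function is skew-symmetric. -/
def IsSkewFun {k : ℕ} {α R : Type*} [CommRing R] (f : (Fin k → α) → R) : Prop :=
  ∀ (σ : Equiv.Perm (Fin k)) (v : Fin k → α),
    f (v ∘ σ) = (Equiv.Perm.sign σ : ℤ) • f v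

/-- The hyperpfaffian of a skew-symmetric `k`-ary function on `[m*k]`:
the signed sum over all set partitions of `[m*k]` into `m` blocks of size `k`. -/
def hyperPf (m k : ℕ) {R : Type*} [CommRing R]
    (f : (Fin k → Fin (m * k)) → R) : R :=
  ∑ π ∈ Finset.univ.filter (IsPartRep m k),
    (Equiv.Perm.sign π : ℤ) • ∏ i : Fin m, f fun j => π (bpos m k i j)

/-- A polynomial in `k` variables is skew-symmetric. -/
def IsSkewPoly {k : ℕ} {R : Type*} [CommRing R] (f : MvPolynomial (Fin k) R) : Prop :=
  ∀ σ : Equiv.Perm (Fin k),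
    MvPolynomial.rename (⇑σ) f = (Equiv.Perm.sign σ : ℤ) • f

/-- The hyperpfaffian `Pf (f(x_S))` of the values of a polynomial `f` in `k` variables
at the variables indexed by the `k`-subsets `S` of `[m*k]`. -/
def hyperPfPoly (m k : ℕ) {R : Type*} [CommRing R]
    (f : MvPolynomial (Fin k) R) : MvPolynomial (Fin (m * k)) R :=
  ∑ π ∈ Finset.univ.filter (IsPartRep m k),
    (Equiv.Perm.sign π : ℤ) •
      ∏ i : Fin m, MvPolynomial.rename (fun j => π (bpos m k i j)) f

/-- The Vandermonde product. -/
def vand (n : ℕ) (R : Type*) [CommRing R] : MvPolynomial (Fin n) R :=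
  ∏ p ∈ Finset.univ.filter (fun p : Fin n × Fin n => p.1 < p.2),
    (MvPolynomial.X p.2 - MvPolynomial.X p.1)

/-- The coefficient of `f` at the monomial with exponent vector `r`. -/
def coeffOf {k : ℕ} {R : Type*} [CommRing R] (f : MvPolynomial (Fin k) R)
    (r : Fin k → ℕ) : R :=
  MvPolynomial.coeff (Finsupp.equivFunOnFinite.symm r) f

/-- Membership in `Γ_{n,k}`: a strictly increasing composition of `k/2*(n-1)`
into `k` distinct nonnegative parts. -/
def InGamma (n k : ℕ) (r : Fin k → ℕ) : Prop :=
  StrictMono r ∧ ∑ j, r j = k / 2 * (n - 1)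

/-- Canonical representative of an element `β` of `R_{n,k}`, encoded as a permutation `e` of
`Fin (m*k)` (identified with `{0,…,n-1}`): the blocks of `e` are the compositions of `β`,
each block is increasing and sums to `k/2*(n-1)`, and the blocks are ordered canonically. -/
def IsWeightRep (m k : ℕ) (e : Equiv.Perm (Fin (m * k))) : Prop :=
  IsPartRep m k e ∧
    ∀ i : Fin m, ∑ j : Fin k, ((e (bpos m k i j)) : ℕ) = k / 2 * (m * k - 1)

/-- The weight of the element `x` of `[m*k]` in the weighted oriented partition with
oriented partition (representative) `π` and weight vectors `w`. -/
def wtOf (m k : ℕ) (π : Equiv.Perm (Fin (m * k))) (w : Fin m → Fin k → ℕ) :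
    Fin (m * k) → ℕ := fun x =>
  w ⟨((π.symm x : Fin (m*k)) : ℕ) / k, Nat.div_lt_of_lt_mul (lt_of_lt_of_le (π.symm x).isLt (le_of_eq (Nat.mul_comm m k)))⟩
    ⟨((π.symm x : Fin (m*k)) : ℕ) % k, Nat.mod_lt _ (by
      have ht := (π.symm x).isLt
      have hk : k ≠ 0 := by rintro rfl; omega
      omega)⟩

end

namespace HyperPfAux

open Finset Equiv MvPolynomial

theorem bpos_eq {m k : ℕ} (p : Fin m × Fin k) : bpos m k p.1 p.2 = finProdFinEquiv p := by
  apply Fin.ext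
  simp [bpos, Nat.add_comm]

theorem symm_bpos {m k : ℕ} (i : Fin m) (j : Fin k) :
    finProdFinEquiv.symm (bpos m k i j) = (i, j) := by
  rw [bpos_eq (i, j), Equiv.symm_apply_apply]

theorem bpos_pair_injective {m k : ℕ} :
    Function.Injective (fun p : Fin m × Fin k => bpos m k p.1 p.2) := by
  intro p q h
  simp only [bpos_eq] at h
  exact finProdFinEquiv.injective h

/-- A block permutation: maps blocks to blocks. -/
def IsBlockPerm (m k : ℕ) (ρ : Equiv.Perm (Fin (m * k))) : Prop :=
  ∃ (η : Equiv.Perm (Fin m)) (σs : Fin m → Equiv.Perm (Fin k)),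
    ∀ i j, ρ (bpos m k i j) = bpos m k (η i) (σs i j)

theorem isBlockPerm_one (m k : ℕ) : IsBlockPerm m k 1 :=
  ⟨1, fun _ => 1, fun _ _ => rfl⟩

theorem sign_of_blockPerm {m k : ℕ} (hk : Even k) {ρ : Equiv.Perm (Fin (m * k))}
    (η : Equiv.Perm (Fin m)) (σs : Fin m → Equiv.Perm (Fin k))
    (h : ∀ i j, ρ (bpos m k i j) = bpos m k (η i) (σs i j)) :
    Equiv.Perm.sign ρ = ∏ i, Equiv.Perm.sign (σs i) := by
  have hρ : ρ = finProdFinEquiv.permCongr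
      ((Equiv.prodCongrLeft (fun _ : Fin k => η)) * (Equiv.prodCongrRight σs)) := by
    apply Equiv.ext
    intro x
    obtain ⟨p, rfl⟩ := finProdFinEquiv.surjective x
    rw [Equiv.permCongr_apply, Equiv.symm_apply_apply]
    show ρ (finProdFinEquiv p) =
      finProdFinEquiv (Equiv.prodCongrLeft (fun _ : Fin k => η) (Equiv.prodCongrRight σs p))
    rw [← bpos_eq p, h p.1 p.2]
    exact bpos_eq (η p.1, σs p.1 p.2)
  rw [hρ, Equiv.Perm.sign_permCongr, map_mul, Equiv.Perm.sign_prodCongrLeft,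
    Equiv.Perm.sign_prodCongrRight]
  have : (∏ _j : Fin k, Equiv.Perm.sign η) = 1 := by
    rw [Finset.prod_const, Finset.card_univ, Fintype.card_fin]
    obtain ⟨c, rfl⟩ := hk
    rw [← two_mul, pow_mul]
    simp
  rw [this, one_mul]


variable {R : Type*} [CommRing R]

/-- The term of the hyperpfaffian sum associated to an arbitrary permutation. -/
noncomputable def termOf (m k : ℕ) (f : MvPolynomial (Fin k) R) (σ : Equiv.Perm (Fin (m * k))) :
    MvPolynomial (Fin (m * k)) R :=
  (Equiv.Perm.sign σ : ℤ) • ∏ i : Fin m, MvPolynomial.rename (fun j => σ (bpos m k i j)) f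

theorem hyperPfPoly_eq_sum_termOf (m k : ℕ) (f : MvPolynomial (Fin k) R) :
    hyperPfPoly m k f = ∑ π ∈ Finset.univ.filter (IsPartRep m k), termOf m k f π := rfl

theorem termOf_mul_blockPerm {m k : ℕ} (hk : Even k) {f : MvPolynomial (Fin k) R}
    (hskew : IsSkewPoly f) (σ : Equiv.Perm (Fin (m * k))) {ρ : Equiv.Perm (Fin (m * k))}
    (hρ : IsBlockPerm m k ρ) : termOf m k f (σ * ρ) = termOf m k f σ := by
  obtain ⟨η, σs, h⟩ := hρ
  have hsign : Equiv.Perm.sign ρ = ∏ i, Equiv.Perm.sign (σs i) := sign_of_blockPerm hk η σs h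
  have hfac : ∀ i : Fin m, MvPolynomial.rename (fun j => (σ * ρ) (bpos m k i j)) f =
      (Equiv.Perm.sign (σs i) : ℤ) •
        MvPolynomial.rename (fun j => σ (bpos m k (η i) j)) f := by
    intro i
    have h1 : (fun j => (σ * ρ) (bpos m k i j)) = (fun j => σ (bpos m k (η i) j)) ∘ ⇑(σs i) := by
      funext j
      simp [Equiv.Perm.mul_apply, h i j]
    rw [h1, ← MvPolynomial.rename_rename, hskew (σs i), map_zsmul]
  have hprod : ∏ i : Fin m, MvPolynomial.rename (fun j => (σ * ρ) (bpos m k i j)) f =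
      (Equiv.Perm.sign ρ : ℤ) •
        ∏ i : Fin m, MvPolynomial.rename (fun j => σ (bpos m k i j)) f := by
    rw [Finset.prod_congr rfl (fun i _ => hfac i)]
    simp only [zsmul_eq_mul]
    rw [Finset.prod_mul_distrib, hsign]
    congr 1
    · norm_cast
    · exact Equiv.prod_comp η (fun i => MvPolynomial.rename (fun j => σ (bpos m k i j)) f)
  have key : ((Equiv.Perm.sign (σ * ρ) : ℤ)) * (Equiv.Perm.sign ρ : ℤ) = (Equiv.Perm.sign σ : ℤ) := by
    rw [map_mul, Units.val_mul, mul_assoc, ← Units.val_mul, Int.units_mul_self, Units.val_one, mul_one]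
  rw [termOf, termOf, hprod, smul_smul, key]

theorem rename_termOf {m k : ℕ} (f : MvPolynomial (Fin k) R) (τ σ : Equiv.Perm (Fin (m * k))) :
    MvPolynomial.rename (⇑τ) (termOf m k f σ) =
      (Equiv.Perm.sign τ : ℤ) • termOf m k f (τ * σ) := by
  rw [termOf, termOf, map_zsmul, map_prod]
  simp only [MvPolynomial.rename_rename]
  rw [smul_smul]
  have key : (Equiv.Perm.sign τ : ℤ) * (Equiv.Perm.sign (τ * σ) : ℤ) = (Equiv.Perm.sign σ : ℤ) := by
    rw [map_mul, Units.val_mul, ← mul_assoc, ← Units.val_mul, Int.units_mul_self, Units.val_one, one_mul]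
  rw [key]
  rfl


theorem bpos_inj2 {m k : ℕ} {i i' : Fin m} {j j' : Fin k}
    (h : bpos m k i j = bpos m k i' j') : i = i' ∧ j = j' := by
  have h3 := bpos_pair_injective (m := m) (k := k) (a₁ := (i, j)) (a₂ := (i', j')) h
  exact Prod.mk.injEq _ _ _ _ ▸ h3

theorem exists_decomp {m k : ℕ} (hk0 : 0 < k) (σ : Equiv.Perm (Fin (m * k))) :
    ∃ π ρ : Equiv.Perm (Fin (m * k)), IsPartRep m k π ∧ IsBlockPerm m k ρ ∧ σ = π * ρ := by
  classical
  set s : Fin m → Finset (Fin (m * k)) :=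
    fun i => Finset.univ.image (fun j : Fin k => σ (bpos m k i j)) with hs
  have hinj : ∀ i : Fin m, Function.Injective (fun j : Fin k => σ (bpos m k i j)) := by
    intro i j j' h
    have h2 : bpos m k i j = bpos m k i j' := σ.injective h
    exact (bpos_inj2 h2).2
  have hcard : ∀ i, (s i).card = k := by
    intro i
    rw [hs]
    rw [Finset.card_image_of_injective _ (hinj i), Finset.card_univ, Fintype.card_fin]
  have hmem : ∀ i j, σ (bpos m k i j) ∈ s i := fun i j =>
    Finset.mem_image_of_mem _ (Finset.mem_univ j)
  have hdisj : ∀ (i i' : Fin m) (x), x ∈ s i → x ∈ s i' → i = i' := by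
    intro i i' x hx hx'
    obtain ⟨j, -, hj⟩ := Finset.mem_image.mp hx
    obtain ⟨j', -, hj'⟩ := Finset.mem_image.mp hx'
    have h2 : bpos m k i j = bpos m k i' j' := σ.injective (hj.trans hj'.symm)
    exact (bpos_inj2 h2).1
  set g : (i : Fin m) → (Fin k ≃o {x // x ∈ s i}) := fun i => (s i).orderIsoOfFin (hcard i) with hg
  set a : Fin m → Fin (m * k) := fun i => (g i ⟨0, hk0⟩ : Fin (m * k)) with ha
  have ha_mem : ∀ i, a i ∈ s i := fun i => (g i ⟨0, hk0⟩).2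
  have ha_inj : Function.Injective a := by
    intro i i' h
    exact hdisj i i' (a i) (ha_mem i) (h ▸ ha_mem i')
  set η : Equiv.Perm (Fin m) := Tuple.sort a with hη
  have hmono : StrictMono (a ∘ ⇑η) :=
    (Tuple.monotone_sort a).strictMono_of_injective (ha_inj.comp η.injective)
  set p : Fin m × Fin k → Fin (m * k) := fun q => (g (η q.1) q.2 : Fin (m * k)) with hp
  have hp_inj : Function.Injective p := by
    rintro ⟨i, j⟩ ⟨i', j'⟩ h
    have hm2 : ((g (η i)) j : Fin (m * k)) ∈ s (η i') := by
      rw [show ((g (η i)) j : Fin (m * k)) = ((g (η i')) j' : Fin (m * k)) from h]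
      exact (g (η i') j').2
    have hi : η i = η i' := hdisj _ _ _ (g (η i) j).2 hm2
    have hii : i = i' := η.injective hi
    subst hii
    have : g (η i) j = g (η i) j' := Subtype.ext h
    rw [(g (η i)).injective this]
  have hp_bij : Function.Bijective p := by
    rw [Fintype.bijective_iff_injective_and_card]
    exact ⟨hp_inj, by simp⟩
  set pe := Equiv.ofBijective p hp_bij with hpe
  set π : Equiv.Perm (Fin (m * k)) := finProdFinEquiv.symm.trans pe with hπdef
  have hπ : ∀ i j, π (bpos m k i j) = (g (η i) j : Fin (m * k)) := by
    intro i j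
    show pe (finProdFinEquiv.symm (bpos m k i j)) = _
    rw [symm_bpos]
    rfl
  have hπ_mono : IsBlockMono m k π := by
    intro i
    intro j j' hjj
    simp only [hπ]
    exact Subtype.coe_lt_coe.mpr ((g (η i)).strictMono hjj)
  have hπ_lead : IsLeadMono m k π := by
    intro i i' j hii
    rw [hπ, hπ]
    exact hmono hii
  set t : (i : Fin m) → Fin k → Fin k :=
    fun i j => (g i).symm ⟨σ (bpos m k i j), hmem i j⟩ with ht
  have ht_inj : ∀ i, Function.Injective (t i) := by
    intro i j j' h
    have h2 : (⟨σ (bpos m k i j), hmem i j⟩ : {x // x ∈ s i}) = ⟨σ (bpos m k i j'), hmem i j'⟩ :=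
      (g i).symm.injective h
    exact hinj i (congrArg Subtype.val h2)
  set σs : Fin m → Equiv.Perm (Fin k) :=
    fun i => Equiv.ofBijective (t i) (Finite.injective_iff_bijective.mp (ht_inj i)) with hσs
  refine ⟨π, π⁻¹ * σ, ⟨hπ_mono, hπ_lead⟩, ⟨η.symm, fun i => σs i, ?_⟩, by group⟩
  intro i j
  apply π.injective
  have h1 : π ((π⁻¹ * σ) (bpos m k i j)) = σ (bpos m k i j) := by
    simp [Equiv.Perm.mul_apply]
  rw [h1, hπ, Equiv.apply_symm_apply]
  show σ (bpos m k i j) = ((g i) (t i j) : Fin (m * k))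
  rw [ht]
  simp


theorem isBlockPerm_mul {m k : ℕ} {ρ₁ ρ₂ : Equiv.Perm (Fin (m * k))}
    (h₁ : IsBlockPerm m k ρ₁) (h₂ : IsBlockPerm m k ρ₂) : IsBlockPerm m k (ρ₁ * ρ₂) := by
  obtain ⟨η₁, σs₁, hb₁⟩ := h₁
  obtain ⟨η₂, σs₂, hb₂⟩ := h₂
  exact ⟨η₁ * η₂, fun i => σs₁ (η₂ i) * σs₂ i, fun i j => by
    simp [Equiv.Perm.mul_apply, hb₂ i j, hb₁]⟩

theorem isBlockPerm_inv {m k : ℕ} {ρ : Equiv.Perm (Fin (m * k))}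
    (h : IsBlockPerm m k ρ) : IsBlockPerm m k ρ⁻¹ := by
  obtain ⟨η, σs, hb⟩ := h
  refine ⟨η⁻¹, fun i => (σs (η⁻¹ i))⁻¹, fun i j => ?_⟩
  apply ρ.injective
  rw [Equiv.Perm.inv_def, Equiv.apply_symm_apply, hb]
  simp [Equiv.Perm.inv_def]

theorem partRep_unique {m k : ℕ} (hk0 : 0 < k) {π h : Equiv.Perm (Fin (m * k))}
    (h1 : IsPartRep m k (π * h)) (h2 : IsPartRep m k π) (hh : IsBlockPerm m k h) : h = 1 := by
  obtain ⟨η, σs, hb⟩ := hh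
  have hf : ∀ i : Fin m, (fun j => (π * h) (bpos m k i j)) = (fun j => π (bpos m k (η i) j)) := by
    intro i
    have hm1 : StrictMono (fun j => (π * h) (bpos m k i j)) := h1.1 i
    have hm2 : StrictMono (fun j => π (bpos m k (η i) j)) := h2.1 (η i)
    have heq : (fun j => (π * h) (bpos m k i j)) = (fun j => π (bpos m k (η i) j)) ∘ ⇑(σs i) := by
      funext j
      simp [Equiv.Perm.mul_apply, hb i j]
    have hrange : Set.range (fun j => (π * h) (bpos m k i j))
        = Set.range (fun j => π (bpos m k (η i) j)) := by
      rw [heq, Set.range_comp, Equiv.range_eq_univ, Set.image_univ]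
    haveI : WellFoundedLT (Fin k) := inferInstance
    exact (StrictMono.range_inj hm1 hm2).mp hrange
  have hb1 : StrictMono (fun i : Fin m => (π * h) (bpos m k i ⟨0, hk0⟩)) :=
    fun i i' hii => h1.2 i i' ⟨0, hk0⟩ hii
  have hb2 : StrictMono (fun i : Fin m => π (bpos m k i ⟨0, hk0⟩)) :=
    fun i i' hii => h2.2 i i' ⟨0, hk0⟩ hii
  have hcomp : (fun i : Fin m => π (bpos m k i ⟨0, hk0⟩)) ∘ ⇑η
      = (fun i : Fin m => (π * h) (bpos m k i ⟨0, hk0⟩)) := by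
    funext i
    exact (congrFun (hf i) ⟨0, hk0⟩).symm
  have hb2' : StrictMono ((fun i : Fin m => π (bpos m k i ⟨0, hk0⟩)) ∘ ⇑η) := by
    rw [hcomp]; exact hb1
  have hη : (fun i : Fin m => π (bpos m k i ⟨0, hk0⟩)) ∘ ⇑η
      = (fun i : Fin m => π (bpos m k i ⟨0, hk0⟩)) := by
    have hrange : Set.range ((fun i : Fin m => π (bpos m k i ⟨0, hk0⟩)) ∘ ⇑η)
        = Set.range (fun i : Fin m => π (bpos m k i ⟨0, hk0⟩)) := by
      rw [Set.range_comp, Equiv.range_eq_univ, Set.image_univ]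
    haveI : WellFoundedLT (Fin m) := inferInstance
    exact (StrictMono.range_inj hb2' hb2).mp hrange
  have hηid : ∀ i, η i = i := by
    intro i
    have := congrFun hη i
    exact (bpos_inj2 (π.injective this)).1
  have hσid : ∀ i j, σs i j = j := by
    intro i j
    have e1 : (π * h) (bpos m k i j) = π (bpos m k (η i) (σs i j)) := by
      simp [Equiv.Perm.mul_apply, hb i j]
    have e2 : (π * h) (bpos m k i j) = π (bpos m k (η i) j) := congrFun (hf i) j
    exact (bpos_inj2 (π.injective (e1.symm.trans e2))).2
  apply Equiv.ext
  intro x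
  obtain ⟨q, rfl⟩ := finProdFinEquiv.surjective x
  rw [← bpos_eq q, hb, hηid, hσid]
  rfl

theorem decomp_unique {m k : ℕ} (hk0 : 0 < k) {π₁ π₂ ρ₁ ρ₂ : Equiv.Perm (Fin (m * k))}
    (h₁ : IsPartRep m k π₁) (h₂ : IsPartRep m k π₂) (hr₁ : IsBlockPerm m k ρ₁)
    (hr₂ : IsBlockPerm m k ρ₂) (h : π₁ * ρ₁ = π₂ * ρ₂) : π₁ = π₂ ∧ ρ₁ = ρ₂ := by
  have hbp : IsBlockPerm m k (ρ₁ * ρ₂⁻¹) := isBlockPerm_mul hr₁ (isBlockPerm_inv hr₂)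
  have key : π₁ * (ρ₁ * ρ₂⁻¹) = π₂ := by
    rw [← mul_assoc, h, mul_assoc, mul_inv_cancel, mul_one]
  have h1 : ρ₁ * ρ₂⁻¹ = 1 := partRep_unique hk0 (key ▸ h₂) h₁ hbp
  constructor
  · rw [← key, h1, mul_one]
  · have := mul_eq_one_iff_eq_inv.mp h1
    rw [this, inv_inv]

theorem allSum_eq {m k : ℕ} (hk : Even k) (hk0 : 0 < k) (f : MvPolynomial (Fin k) R)
    (hskew : IsSkewPoly f) :
    ∑ σ : Equiv.Perm (Fin (m * k)), termOf m k f σ =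
      Fintype.card {ρ : Equiv.Perm (Fin (m * k)) // IsBlockPerm m k ρ} • hyperPfPoly m k f := by
  classical
  set Φ : {π : Equiv.Perm (Fin (m * k)) // IsPartRep m k π} ×
      {ρ : Equiv.Perm (Fin (m * k)) // IsBlockPerm m k ρ} → Equiv.Perm (Fin (m * k)) :=
    fun q => q.1.1 * q.2.1 with hΦ
  have hΦ_bij : Function.Bijective Φ := by
    constructor
    · rintro ⟨⟨π₁, hp₁⟩, ⟨ρ₁, hr₁⟩⟩ ⟨⟨π₂, hp₂⟩, ⟨ρ₂, hr₂⟩⟩ h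
      obtain ⟨e1, e2⟩ := decomp_unique hk0 hp₁ hp₂ hr₁ hr₂ h
      simp [Prod.ext_iff, Subtype.ext_iff, e1, e2]
    · intro σ
      obtain ⟨π, ρ, hp, hr, hd⟩ := exists_decomp hk0 σ
      exact ⟨⟨⟨π, hp⟩, ⟨ρ, hr⟩⟩, hd.symm⟩
  have h1 : ∑ σ : Equiv.Perm (Fin (m * k)), termOf m k f σ =
      ∑ q, termOf m k f (Φ q) := (Equiv.sum_comp (Equiv.ofBijective Φ hΦ_bij) (termOf m k f)).symm
  rw [h1, Fintype.sum_prod_type]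
  have h2 : ∀ (π : {π : Equiv.Perm (Fin (m * k)) // IsPartRep m k π}),
      ∑ ρ : {ρ : Equiv.Perm (Fin (m * k)) // IsBlockPerm m k ρ}, termOf m k f (Φ (π, ρ)) =
      Fintype.card {ρ : Equiv.Perm (Fin (m * k)) // IsBlockPerm m k ρ} • termOf m k f π.1 := by
    intro π
    rw [Finset.sum_congr rfl (fun ρ _ => termOf_mul_blockPerm hk hskew π.1 ρ.2)]
    rw [Finset.sum_const, Finset.card_univ]
  rw [Finset.sum_congr rfl (fun π _ => h2 π), ← Finset.smul_sum]
  congr 1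
  rw [hyperPfPoly_eq_sum_termOf]
  exact (Finset.sum_subtype _ (by simp) (termOf m k f)).symm


theorem le_strictMono {n : ℕ} {f : Fin n → ℕ} (hf : StrictMono f) (i : Fin n) :
    (i : ℕ) ≤ f i := by
  suffices h : ∀ (t : ℕ) (i : Fin n), (i : ℕ) = t → t ≤ f i from h _ i rfl
  intro t
  induction t with
  | zero => intro i _; exact Nat.zero_le _
  | succ t ih =>
    intro i hi
    have hlt : t < n := by omega
    have h1 := ih ⟨t, hlt⟩ rfl
    have h2 : f ⟨t, hlt⟩ < f i := hf (by rw [Fin.lt_def]; simp; omega)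
    omega

theorem sum_le_of_injective {n : ℕ} {u : Fin n → ℕ} (hu : Function.Injective u) :
    ∑ i : Fin n, (i : ℕ) ≤ ∑ i, u i := by
  classical
  set s : Finset ℕ := Finset.univ.image u with hs
  have hcard : s.card = n := by
    rw [hs, Finset.card_image_of_injective _ hu, Finset.card_univ, Fintype.card_fin]
  have h1 : ∑ x ∈ s, x = ∑ i : Fin n, u i := by
    rw [hs]
    exact Finset.sum_image (fun a _ b _ h => hu h)
  set e := s.orderIsoOfFin hcard with he
  have hmono : StrictMono (fun i : Fin n => (e i : ℕ)) := by
    intro i j h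
    exact_mod_cast e.strictMono h
  have h2 : ∑ x ∈ s, x = ∑ i : Fin n, (e i : ℕ) := by
    rw [← Finset.sum_coe_sort s (fun x => (x : ℕ))]
    exact (Equiv.sum_comp e.toEquiv (fun x => (x : ℕ))).symm
  rw [← h1, h2]
  exact Finset.sum_le_sum (fun i _ => le_strictMono hmono i)

theorem eq_zero_of_alternating {n : ℕ} {R : Type*} [Field R] [CharZero R]
    {P : MvPolynomial (Fin n) R} {D : ℕ} (hP : P.IsHomogeneous D)
    (hD : D < ∑ i : Fin n, (i : ℕ))
    (halt : ∀ a b : Fin n, a ≠ b → MvPolynomial.rename (⇑(Equiv.swap a b)) P = -P) :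
    P = 0 := by
  ext u
  rw [MvPolynomial.coeff_zero]
  by_contra hc
  by_cases hu : ∀ a b : Fin n, u a = u b → a = b
  · have hinj : Function.Injective (fun x : Fin n => u x) := fun a b h => hu a b h
    have hdeg : Finsupp.degree u = D := by
      rw [Finsupp.degree_eq_weight_one]
      exact hP hc
    have hsum : ∑ x : Fin n, u x = D := by
      rw [← hdeg, Finsupp.degree]
      exact (Finset.sum_subset (Finset.subset_univ _)
        (fun x _ hx => Finsupp.notMem_support_iff.mp hx)).symm
    have := sum_le_of_injective hinj
    omega
  · push_neg at hu
    obtain ⟨a, b, hab, hne⟩ := hu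
    have hfix : Finsupp.mapDomain (⇑(Equiv.swap a b)) u = u := by
      ext x
      rw [Finsupp.mapDomain_equiv_apply, Equiv.symm_swap]
      rcases eq_or_ne x a with rfl | hxa
      · rw [Equiv.swap_apply_left]; exact hab.symm
      rcases eq_or_ne x b with rfl | hxb
      · rw [Equiv.swap_apply_right]; exact hab
      · rw [Equiv.swap_apply_of_ne_of_ne hxa hxb]
    have h1 : MvPolynomial.coeff u P = - MvPolynomial.coeff u P := by
      conv_lhs => rw [← MvPolynomial.coeff_rename_mapDomain (⇑(Equiv.swap a b))
        (Equiv.swap a b).injective P u, hfix, halt a b hne, MvPolynomial.coeff_neg]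
    apply hc
    have h2 : (2 : R) * MvPolynomial.coeff u P = 0 := by
      rw [two_mul]
      nth_rewrite 2 [h1]
      ring
    rcases mul_eq_zero.mp h2 with h | h
    · exact absurd h two_ne_zero
    · exact h

theorem termOf_isHomogeneous {m k d : ℕ} {f : MvPolynomial (Fin k) R} (hf : f.IsHomogeneous d)
    (σ : Equiv.Perm (Fin (m * k))) : (termOf m k f σ).IsHomogeneous (m * d) := by
  have hp : (∏ i : Fin m,
      MvPolynomial.rename (fun j => σ (bpos m k i j)) f).IsHomogeneous (m * d) := by
    have h1 := MvPolynomial.IsHomogeneous.prod Finset.univ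
      (fun i : Fin m => MvPolynomial.rename (fun j => σ (bpos m k i j)) f) (fun _ => d)
      (fun i _ => hf.rename_isHomogeneous)
    simpa using h1
  rw [termOf]
  have h2 := (MvPolynomial.homogeneousSubmodule (Fin (m * k)) R (m * d)).toAddSubgroup.zsmul_mem
    ((MvPolynomial.mem_homogeneousSubmodule _ _).mpr hp) (Equiv.Perm.sign σ : ℤ)
  exact (MvPolynomial.mem_homogeneousSubmodule _ _).mp ((Submodule.mem_toAddSubgroup _).mp h2)

end HyperPfAux

theorem stmt11 (m k : ℕ) (hk : Even k) (R : Type*) [Field R] [CharZero R] (d : ℕ)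
    (f : MvPolynomial (Fin k) R) (hhom : f.IsHomogeneous d)
    (hd : d < k / 2 * (m * k - 1)) (hskew : IsSkewPoly f) :
    hyperPfPoly m k f = 0 := by
  classical
  rcases Nat.eq_zero_or_pos k with rfl | hk0
  · simp at hd
  rcases Nat.eq_zero_or_pos m with rfl | hm0
  · simp at hd
  have hF := HyperPfAux.allSum_eq (m := m) hk hk0 f hskew
  set c := Fintype.card {ρ : Equiv.Perm (Fin (m * k)) // HyperPfAux.IsBlockPerm m k ρ} with hcdef
  have hc : 0 < c := Fintype.card_pos_iff.mpr ⟨⟨1, HyperPfAux.isBlockPerm_one m k⟩⟩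
  have hhomF : (∑ σ : Equiv.Perm (Fin (m * k)), HyperPfAux.termOf m k f σ).IsHomogeneous (m * d) :=
    MvPolynomial.IsHomogeneous.sum _ _ _ (fun σ _ => HyperPfAux.termOf_isHomogeneous hhom σ)
  have haltF : ∀ a b : Fin (m * k), a ≠ b →
      MvPolynomial.rename (⇑(Equiv.swap a b))
        (∑ σ : Equiv.Perm (Fin (m * k)), HyperPfAux.termOf m k f σ) =
      -(∑ σ : Equiv.Perm (Fin (m * k)), HyperPfAux.termOf m k f σ) := by
    intro a b hab
    rw [map_sum, Finset.sum_congr rfl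
      (fun σ _ => HyperPfAux.rename_termOf f (Equiv.swap a b) σ), ← Finset.smul_sum]
    have h1 : ∑ σ : Equiv.Perm (Fin (m * k)), HyperPfAux.termOf m k f (Equiv.swap a b * σ) =
        ∑ σ : Equiv.Perm (Fin (m * k)), HyperPfAux.termOf m k f σ :=
      Fintype.sum_equiv (Equiv.mulLeft (Equiv.swap a b)) _ _ (fun σ => rfl)
    rw [h1, Equiv.Perm.sign_swap hab]
    simp
  have hdeg : m * d < ∑ i : Fin (m * k), (i : ℕ) := by
    obtain ⟨c2, hc2⟩ := hk
    have hk2 : k / 2 = c2 := by omega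
    set N1 := m * k - 1 with hN1
    have hS : (∑ i ∈ Finset.range (m * k), i) * 2 = (m * k) * N1 :=
      Finset.sum_range_id_mul_two (m * k)
    have hmul : m * k * N1 = 2 * (m * (c2 * N1)) := by
      rw [hc2]; ring
    have h3 : m * d < m * (c2 * N1) := by
      apply mul_lt_mul_of_pos_left _ hm0
      rw [← hk2]; exact hd
    have h4 : ∑ i : Fin (m * k), (i : ℕ) = ∑ i ∈ Finset.range (m * k), i :=
      Fin.sum_univ_eq_sum_range (fun i => i) (m * k)
    omega
  have hF0 : (∑ σ : Equiv.Perm (Fin (m * k)), HyperPfAux.termOf m k f σ) = 0 :=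
    HyperPfAux.eq_zero_of_alternating hhomF hdeg haltF
  rw [hF0] at hF
  have h5 : (c : R) • hyperPfPoly m k f = 0 := by
    rw [Nat.cast_smul_eq_nsmul]
    exact hF.symm
  have hcast : (c : R) ≠ 0 := Nat.cast_ne_zero.mpr hc.ne'
  rw [MvPolynomial.smul_eq_C_mul] at h5
  rcases mul_eq_zero.mp h5 with h | h
  · exact absurd (by simpa using h) hcast
  · exact h
end

section
/- Let f(x_1,...,x_k) be a skew-symmetric polynomial (f changes sign under transposing any two of its arguments). If two of the substituted variables coincide, x_i = x_j with i ≠ j, then the hyperpfaffian Pf(f(x_S))_{S ∈ binom([n],k)} of order n vanishes. Consequently the Vandermonde product Π_{1≤i<j≤n}(x_j − x_i) divides the polynomial Pf(f(x_S)). -/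
open Finset Equiv MvPolynomial

open scoped Classical

noncomputable section

section Aux

variable {m k : ℕ}

lemma bpos_val (i : Fin m) (j : Fin k) : ((bpos m k i j : ℕ)) = k * i + j := rfl

lemma bpos_inj {i i' : Fin m} {j j' : Fin k}
    (h : bpos m k i j = bpos m k i' j') : i = i' ∧ j = j' := by
  have hv : k * (i : ℕ) + (j : ℕ) = k * (i' : ℕ) + (j' : ℕ) := congrArg Fin.val h
  have hj := j.isLt; have hj' := j'.isLt
  have hi : (i : ℕ) = (i' : ℕ) := by
    rcases Nat.lt_trichotomy (i : ℕ) (i' : ℕ) with h' | h' | h'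
    · nlinarith [Nat.mul_le_mul_left k h']
    · exact h'
    · nlinarith [Nat.mul_le_mul_left k h']
  have hjv : (j : ℕ) = (j' : ℕ) := by rw [hi] at hv; omega
  exact ⟨Fin.ext hi, Fin.ext hjv⟩

lemma bpos_surj (hk0 : 0 < k) (x : Fin (m * k)) :
    ∃ i j, x = bpos m k i j := by
  have hx := x.isLt
  refine ⟨⟨(x : ℕ) / k, ?_⟩, ⟨(x : ℕ) % k, Nat.mod_lt _ hk0⟩, ?_⟩
  · apply Nat.div_lt_of_lt_mul
    rw [Nat.mul_comm k m]; exact hx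
  · apply Fin.ext
    exact (Nat.div_add_mod (x : ℕ) k).symm

lemma perm_ext_bpos (hk0 : 0 < k) {e e' : Equiv.Perm (Fin (m * k))}
    (h : ∀ i j, e (bpos m k i j) = e' (bpos m k i j)) : e = e' := by
  ext x
  obtain ⟨i, j, rfl⟩ := bpos_surj hk0 x
  exact congrArg Fin.val (h i j)

/-- The block permutation associated to inner permutations `g` and a block permutation `s`. -/
def hAct (g : Fin m → Equiv.Perm (Fin k)) (s : Equiv.Perm (Fin m)) :
    Equiv.Perm (Fin (m * k)) :=
  (finProdFinEquiv : Fin m × Fin k ≃ Fin (m * k)).permCongr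
    (Equiv.prodShear (s : Fin m ≃ Fin m) g)

lemma finProdFinEquiv_bpos (i : Fin m) (j : Fin k) :
    finProdFinEquiv (i, j) = bpos m k i j := by
  apply Fin.ext
  simp [bpos_val, finProdFinEquiv, Nat.add_comm, Nat.mul_comm]

lemma hAct_apply (g : Fin m → Equiv.Perm (Fin k)) (s : Equiv.Perm (Fin m))
    (i : Fin m) (j : Fin k) :
    hAct g s (bpos m k i j) = bpos m k (s i) (g i j) := by
  rw [← finProdFinEquiv_bpos, ← finProdFinEquiv_bpos]
  simp [hAct, Equiv.permCongr_apply]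

lemma hAct_mul (g g' : Fin m → Equiv.Perm (Fin k)) (s s' : Equiv.Perm (Fin m)) (hk0 : 0 < k) :
    hAct g s * hAct g' s' = hAct (fun i => g (s' i) * g' i) (s * s') := by
  apply perm_ext_bpos hk0
  intro i j
  simp only [Equiv.Perm.mul_apply, hAct_apply]

lemma hAct_one (hk0 : 0 < k) : hAct (1 : Fin m → Equiv.Perm (Fin k)) 1 = 1 := by
  apply perm_ext_bpos hk0
  intro i j
  simp [hAct_apply]

lemma hAct_inv (g : Fin m → Equiv.Perm (Fin k)) (s : Equiv.Perm (Fin m)) (hk0 : 0 < k) :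
    (hAct g s)⁻¹ = hAct (fun i => (g (s⁻¹ i))⁻¹) s⁻¹ := by
  apply inv_eq_of_mul_eq_one_right
  rw [hAct_mul _ _ _ _ hk0]
  have h1 : (fun i => g (s⁻¹ i) * (g (s⁻¹ i))⁻¹) = (1 : Fin m → Equiv.Perm (Fin k)) := by
    funext i; simp
  rw [h1, mul_inv_cancel]
  exact hAct_one hk0

lemma hAct_data_inj (hk0 : 0 < k) {g g' : Fin m → Equiv.Perm (Fin k)}
    {s s' : Equiv.Perm (Fin m)} (h : hAct g s = hAct g' s') : g = g' ∧ s = s' := by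
  have key : ∀ i j, bpos m k (s i) (g i j) = bpos m k (s' i) (g' i j) := by
    intro i j
    rw [← hAct_apply g s, ← hAct_apply g' s', h]
  constructor
  · funext i; apply Equiv.ext; intro j
    exact (bpos_inj (key i j)).2
  · apply Equiv.ext; intro i
    exact (bpos_inj (key i ⟨0, hk0⟩)).1

lemma strictMono_perm_eq_one {N : ℕ} (e : Equiv.Perm (Fin N)) (h : StrictMono ⇑e) :
    e = 1 := by
  haveI : WellFoundedLT (Fin N) := inferInstance
  have hinv : StrictMono ⇑e⁻¹ := by
    intro a b hab
    rcases lt_trichotomy (e⁻¹ a) (e⁻¹ b) with h' | h' | h'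
    · exact h'
    · exfalso
      have := congrArg e h'
      simp only [Equiv.Perm.coe_inv, Equiv.apply_symm_apply] at this
      exact absurd this (ne_of_lt hab)
    · exfalso
      have := h h'
      simp only [Equiv.Perm.coe_inv, Equiv.apply_symm_apply] at this
      exact absurd hab (not_lt_of_gt this)
  apply Equiv.ext
  intro x
  have h1 : x ≤ e x := h.le_apply (x := x)
  have h2 : x ≤ e⁻¹ x := hinv.le_apply (x := x)
  have h3 : e x ≤ e (e⁻¹ x) := h.monotone h2
  simp only [Equiv.Perm.coe_inv, Equiv.apply_symm_apply] at h3
  exact le_antisymm h3 h1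

end Aux
section Sign

variable {m k : ℕ}

lemma prodShear_refl_eq_one :
    Equiv.prodShear (Equiv.refl (Fin m)) (fun _ : Fin m => Equiv.refl (Fin k)) =
      (1 : Equiv.Perm (Fin m × Fin k)) := by
  apply Equiv.ext; rintro ⟨i, j⟩; rfl

lemma sign_prodShear_aux (S : Finset (Fin m)) :
    ∀ g : Fin m → Equiv.Perm (Fin k), (∀ i ∉ S, g i = 1) →
      Equiv.Perm.sign
        ((Equiv.prodShear (Equiv.refl (Fin m)) (fun i => (g i : Fin k ≃ Fin k))) :
          Equiv.Perm (Fin m × Fin k)) = ∏ i ∈ S, Equiv.Perm.sign (g i) := by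
  classical
  induction S using Finset.induction_on with
  | empty =>
    intro g hg
    have : (fun i => (g i : Fin k ≃ Fin k)) = fun _ : Fin m => Equiv.refl (Fin k) := by
      funext i
      rw [hg i (Finset.notMem_empty i)]; rfl
    rw [this, prodShear_refl_eq_one]
    simp
  | insert a S ha ih =>
    intro g hg
    set g' : Fin m → Equiv.Perm (Fin k) := Function.update g a 1 with hg'
    have key : (Equiv.prodShear (Equiv.refl (Fin m)) (fun i => (g i : Fin k ≃ Fin k)) :
        Equiv.Perm (Fin m × Fin k)) =
        Equiv.Perm.prodExtendRight a (g a) *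
          (Equiv.prodShear (Equiv.refl (Fin m)) (fun i => (g' i : Fin k ≃ Fin k))) := by
      apply Equiv.ext; rintro ⟨i, j⟩
      by_cases hia : i = a
      · subst hia
        have : g' i = 1 := Function.update_self _ _ _
        simp [Equiv.Perm.mul_apply, Equiv.prodShear_apply, this,
          Equiv.Perm.prodExtendRight_apply_eq]
      · have : g' i = g i := Function.update_of_ne hia _ _
        simp [Equiv.Perm.mul_apply, Equiv.prodShear_apply, this,
          Equiv.Perm.prodExtendRight_apply_ne _ hia]
    rw [key, map_mul, Equiv.Perm.sign_prodExtendRight,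
      ih g' (by
        intro i hi
        by_cases hia : i = a
        · subst hia; exact Function.update_self _ _ _
        · rw [hg', Function.update_of_ne hia]
          exact hg i (by simp [hia, hi])),
      Finset.prod_insert ha]
    congr 1
    apply Finset.prod_congr rfl
    intro i hi
    have : g' i = g i := Function.update_of_ne (by rintro rfl; exact ha hi) _ _
    rw [this]

lemma sign_prodShear_one (g : Fin m → Equiv.Perm (Fin k)) :
    Equiv.Perm.sign
      ((Equiv.prodShear (Equiv.refl (Fin m)) (fun i => (g i : Fin k ≃ Fin k))) :
        Equiv.Perm (Fin m × Fin k)) = ∏ i, Equiv.Perm.sign (g i) :=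
  sign_prodShear_aux Finset.univ g (fun i hi => absurd (Finset.mem_univ i) hi)

lemma sign_prodCongr_refl (hk : Even k) (s : Equiv.Perm (Fin m)) :
    Equiv.Perm.sign
      ((Equiv.prodCongr (s : Fin m ≃ Fin m) (Equiv.refl (Fin k))) :
        Equiv.Perm (Fin m × Fin k)) = 1 := by
  have key : (Equiv.prodCongr (s : Fin m ≃ Fin m) (Equiv.refl (Fin k)) :
      Equiv.Perm (Fin m × Fin k)) =
      (Equiv.prodComm (Fin k) (Fin m)).permCongr
        (Equiv.prodShear (Equiv.refl (Fin k)) (fun _ => (s : Fin m ≃ Fin m))) := by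
    apply Equiv.ext; rintro ⟨i, j⟩
    simp [Equiv.permCongr_apply, Equiv.prodShear_apply]
  rw [key, Equiv.Perm.sign_permCongr]
  rw [sign_prodShear_one (fun _ : Fin k => s)]
  rw [Finset.prod_const, Finset.card_univ, Fintype.card_fin]
  obtain ⟨t, ht⟩ := hk
  rw [ht, ← two_mul, pow_mul, Int.units_sq, one_pow]

lemma sign_hAct (hk : Even k) (g : Fin m → Equiv.Perm (Fin k)) (s : Equiv.Perm (Fin m)) :
    Equiv.Perm.sign (hAct g s) = ∏ i, Equiv.Perm.sign (g i) := by
  rw [hAct, Equiv.Perm.sign_permCongr]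
  have hdec : (Equiv.prodShear (s : Fin m ≃ Fin m) g : Equiv.Perm (Fin m × Fin k)) =
      (Equiv.prodCongr (s : Fin m ≃ Fin m) (Equiv.refl (Fin k)) :
        Equiv.Perm (Fin m × Fin k)) *
      (Equiv.prodShear (Equiv.refl (Fin m)) (fun i => (g i : Fin k ≃ Fin k))) := by
    apply Equiv.ext; rintro ⟨i, j⟩
    simp [Equiv.Perm.mul_apply, Equiv.prodShear_apply]
  rw [hdec, map_mul, sign_prodCongr_refl hk, one_mul, sign_prodShear_one]

end Sign
section Terms

variable {m k : ℕ} {R : Type*} [CommRing R]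

/-- The factor of a single term of the hyperpfaffian. -/
def Fterm (m k : ℕ) {R : Type*} [CommRing R] (f : MvPolynomial (Fin k) R)
    (σ : Equiv.Perm (Fin (m * k))) : MvPolynomial (Fin (m * k)) R :=
  ∏ i : Fin m, MvPolynomial.rename (fun j => σ (bpos m k i j)) f

/-- A single signed term of the hyperpfaffian. -/
def Tterm (m k : ℕ) {R : Type*} [CommRing R] (f : MvPolynomial (Fin k) R)
    (σ : Equiv.Perm (Fin (m * k))) : MvPolynomial (Fin (m * k)) R :=
  (Equiv.Perm.sign σ : ℤ) • Fterm m k f σ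

lemma hyperPfPoly_eq_sum (f : MvPolynomial (Fin k) R) :
    hyperPfPoly m k f = ∑ π ∈ Finset.univ.filter (IsPartRep m k), Tterm m k f π := rfl

lemma Tterm_hAct (hk : Even k) (hk0 : 0 < k) {f : MvPolynomial (Fin k) R}
    (hskew : IsSkewPoly f) (σ : Equiv.Perm (Fin (m * k)))
    (g : Fin m → Equiv.Perm (Fin k)) (s : Equiv.Perm (Fin m)) :
    Tterm m k f (σ * hAct g s) = Tterm m k f σ := by
  have happ : ∀ i j, (σ * hAct g s) (bpos m k i j) = σ (bpos m k (s i) (g i j)) := by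
    intro i j; rw [Equiv.Perm.mul_apply, hAct_apply]
  have hfac : ∀ i : Fin m,
      MvPolynomial.rename (fun j => (σ * hAct g s) (bpos m k i j)) f =
        ((Equiv.Perm.sign (g i) : ℤ) : MvPolynomial (Fin (m * k)) R) *
          MvPolynomial.rename (fun j => σ (bpos m k (s i) j)) f := by
    intro i
    have h1 : (fun j => (σ * hAct g s) (bpos m k i j)) =
        (fun j => σ (bpos m k (s i) j)) ∘ ⇑(g i) := by
      funext j; exact happ i j
    rw [h1, ← MvPolynomial.rename_rename, hskew (g i), map_zsmul, zsmul_eq_mul]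
  have hF : Fterm m k f (σ * hAct g s) =
      ((∏ i : Fin m, (Equiv.Perm.sign (g i) : ℤ) : ℤ) : MvPolynomial (Fin (m * k)) R) *
        Fterm m k f σ := by
    unfold Fterm
    rw [Finset.prod_congr rfl (fun i _ => hfac i), Finset.prod_mul_distrib]
    congr 1
    · push_cast; ring
    · exact Equiv.prod_comp s (fun a => MvPolynomial.rename (fun j => σ (bpos m k a j)) f)
  have hsgn : ((Equiv.Perm.sign (σ * hAct g s) : ℤˣ) : ℤ) =
      ((Equiv.Perm.sign σ : ℤˣ) : ℤ) * ∏ i : Fin m, ((Equiv.Perm.sign (g i) : ℤˣ) : ℤ) := by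
    rw [map_mul, sign_hAct hk, Units.val_mul]
    congr 1
    exact map_prod (Units.coeHom ℤ) _ _
  have hP2 : (∏ i : Fin m, ((Equiv.Perm.sign (g i) : ℤˣ) : ℤ)) *
      (∏ i : Fin m, ((Equiv.Perm.sign (g i) : ℤˣ) : ℤ)) = 1 := by
    rw [← Finset.prod_mul_distrib]
    apply Finset.prod_eq_one
    intro i _
    have h := congrArg (Units.val) (Int.units_mul_self (Equiv.Perm.sign (g i)))
    simpa using h
  have hP2' : ((∏ i : Fin m, ((Equiv.Perm.sign (g i) : ℤˣ) : ℤ) : ℤ) :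
      MvPolynomial (Fin (m * k)) R) *
      ((∏ i : Fin m, ((Equiv.Perm.sign (g i) : ℤˣ) : ℤ) : ℤ) :
      MvPolynomial (Fin (m * k)) R) = 1 := by
    rw [← Int.cast_mul, hP2, Int.cast_one]
  unfold Tterm
  rw [hF, hsgn, zsmul_eq_mul, zsmul_eq_mul, Int.cast_mul]
  linear_combination (((Equiv.Perm.sign σ : ℤˣ) : ℤ) : MvPolynomial (Fin (m * k)) R)
    * Fterm m k f σ * hP2'

lemma rep_unique (hk0 : 0 < k) {π : Equiv.Perm (Fin (m * k))} (hπ : IsPartRep m k π)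
    (g : Fin m → Equiv.Perm (Fin k)) (s : Equiv.Perm (Fin m))
    (hπ' : IsPartRep m k (π * hAct g s)) : g = 1 ∧ s = 1 := by
  have happ : ∀ i j, (π * hAct g s) (bpos m k i j) = π (bpos m k (s i) (g i j)) := by
    intro i j; rw [Equiv.Perm.mul_apply, hAct_apply]
  have hg : g = 1 := by
    funext i
    apply strictMono_perm_eq_one
    have h1 : StrictMono (fun j => π (bpos m k (s i) (g i j))) := by
      have h0 := hπ'.1 i
      simpa only [happ] using h0
    have h2 : StrictMono (fun j => π (bpos m k (s i) j)) := hπ.1 (s i)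
    intro a b hab
    exact (h2.lt_iff_lt).mp (h1 hab)
  subst hg
  refine ⟨rfl, ?_⟩
  apply strictMono_perm_eq_one
  have hL : StrictMono (fun a => π (bpos m k a (⟨0, hk0⟩ : Fin k))) := by
    intro a b hab
    exact hπ.2 a b ⟨0, hk0⟩ hab
  have hL' : StrictMono (fun a => π (bpos m k (s a) (⟨0, hk0⟩ : Fin k))) := by
    intro a b hab
    have h0 := hπ'.2 a b ⟨0, hk0⟩ hab
    simpa only [happ, Pi.one_apply, Equiv.Perm.one_apply] using h0
  intro a b hab
  exact hL.lt_iff_lt.mp (hL' hab)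

lemma exists_factorization (hk0 : 0 < k) (σ : Equiv.Perm (Fin (m * k))) :
    ∃ (π : Equiv.Perm (Fin (m * k))) (g : Fin m → Equiv.Perm (Fin k))
      (s : Equiv.Perm (Fin m)), IsPartRep m k π ∧ σ = π * hAct g s := by
  classical
  set g0 : Fin m → Equiv.Perm (Fin k) :=
    fun i => Tuple.sort (fun j => σ (bpos m k i j)) with hg0
  set σ₁ : Equiv.Perm (Fin (m * k)) := σ * hAct g0 1 with hσ₁
  have hb1 : ∀ i, StrictMono (fun j => σ₁ (bpos m k i j)) := by
    intro i
    have hcomp : (fun j => σ₁ (bpos m k i j)) =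
        (fun j => σ (bpos m k i j)) ∘ ⇑(g0 i) := by
      funext j
      rw [hσ₁, Equiv.Perm.mul_apply, hAct_apply]
      rfl
    rw [hcomp]
    apply Monotone.strictMono_of_injective
    · exact Tuple.monotone_sort (fun j => σ (bpos m k i j))
    · apply Function.Injective.comp
      · intro a b hab
        exact (bpos_inj (σ.injective hab)).2
      · exact (g0 i).injective
  set s0 : Equiv.Perm (Fin m) :=
    Tuple.sort (fun i => σ₁ (bpos m k i ⟨0, hk0⟩)) with hs0
  set π : Equiv.Perm (Fin (m * k)) := σ₁ * hAct (fun _ => 1) s0 with hπdef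
  have hπapp : ∀ i j, π (bpos m k i j) = σ₁ (bpos m k (s0 i) j) := by
    intro i j
    rw [hπdef, Equiv.Perm.mul_apply, hAct_apply]
    rfl
  have hπ : IsPartRep m k π := by
    constructor
    · intro i
      have : (fun j => π (bpos m k i j)) = (fun j => σ₁ (bpos m k (s0 i) j)) := by
        funext j; exact hπapp i j
      rw [this]
      exact hb1 (s0 i)
    · intro i i' j0 hlt
      have hLmono : Monotone ((fun a => σ₁ (bpos m k a ⟨0, hk0⟩)) ∘ ⇑s0) :=
        Tuple.monotone_sort (fun i => σ₁ (bpos m k i ⟨0, hk0⟩))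
      have hLinj : Function.Injective ((fun a => σ₁ (bpos m k a ⟨0, hk0⟩)) ∘ ⇑s0) := by
        apply Function.Injective.comp
        · intro a b hab
          exact (bpos_inj (σ₁.injective hab)).1
        · exact s0.injective
      have hLs : StrictMono ((fun a => σ₁ (bpos m k a ⟨0, hk0⟩)) ∘ ⇑s0) :=
        hLmono.strictMono_of_injective hLinj
      have h2 := hLs hlt
      simp only [Function.comp_apply] at h2
      rw [hπapp i, hπapp i']
      exact h2
  refine ⟨π, fun i => ((fun i' => g0 (s0 i') * 1) ((1 * s0)⁻¹ i))⁻¹, (1 * s0)⁻¹, hπ, ?_⟩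
  have hfac : π = σ * hAct (fun i => g0 (s0 i) * (1 : Equiv.Perm (Fin k))) (1 * s0) := by
    rw [hπdef, hσ₁, mul_assoc, hAct_mul _ _ _ _ hk0]
  have hσeq : σ = π * (hAct (fun i => g0 (s0 i) * (1 : Equiv.Perm (Fin k))) (1 * s0))⁻¹ := by
    rw [hfac, mul_inv_cancel_right]
  rw [hAct_inv _ _ hk0] at hσeq
  exact hσeq

end Terms
section SumLemma

variable {m k : ℕ} {R : Type*} [CommRing R]

lemma sum_coset (hk : Even k) (hk0 : 0 < k) {f : MvPolynomial (Fin k) R}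
    (hskew : IsSkewPoly f) (τ : Equiv.Perm (Fin (m * k))) :
    ∑ σ : Equiv.Perm (Fin (m * k)), Tterm m k f (τ * σ) =
      Fintype.card ((Fin m → Equiv.Perm (Fin k)) × Equiv.Perm (Fin m)) •
        ∑ π ∈ Finset.univ.filter (IsPartRep m k), Tterm m k f (τ * π) := by
  classical
  have hbij : ∑ a ∈ (Finset.univ.filter (IsPartRep m k)) ×ˢ
      (Finset.univ : Finset ((Fin m → Equiv.Perm (Fin k)) × Equiv.Perm (Fin m))),
      Tterm m k f (τ * (a.1 * hAct a.2.1 a.2.2)) =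
      ∑ σ : Equiv.Perm (Fin (m * k)), Tterm m k f (τ * σ) := by
    apply Finset.sum_bij (fun a _ => a.1 * hAct a.2.1 a.2.2)
    · intro a _; exact Finset.mem_univ _
    · rintro ⟨π₁, g₁, s₁⟩ h₁ ⟨π₂, g₂, s₂⟩ h₂ hab
      simp only [Finset.mem_product, Finset.mem_filter, Finset.mem_univ, true_and] at h₁ h₂
      have hrep₁ : IsPartRep m k π₁ := h₁.1
      have hrep₂ : IsPartRep m k π₂ := h₂.1
      have h2 : π₂ = π₁ * (hAct g₁ s₁ * (hAct g₂ s₂)⁻¹) := by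
        rw [← mul_assoc]
        exact eq_mul_inv_of_mul_eq hab.symm
      rw [hAct_inv _ _ hk0, hAct_mul _ _ _ _ hk0] at h2
      have hone := rep_unique hk0 hrep₁ _ _ (h2 ▸ hrep₂)
      have hπeq : π₂ = π₁ := by
        rw [h2, hone.1, hone.2]
        rw [hAct_one hk0, mul_one]
      have hhA : hAct g₁ s₁ = hAct g₂ s₂ := by
        apply mul_left_cancel (a := π₁)
        rw [hab, hπeq]
      obtain ⟨hgeq, hseq⟩ := hAct_data_inj hk0 hhA
      simp only [Prod.mk.injEq]
      exact ⟨hπeq.symm, hgeq, hseq⟩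
    · intro σ _
      obtain ⟨π, g, s, hπ, hfac⟩ := exists_factorization hk0 σ
      exact ⟨(π, (g, s)), Finset.mem_product.mpr
        ⟨Finset.mem_filter.mpr ⟨Finset.mem_univ _, hπ⟩, Finset.mem_univ _⟩, hfac.symm⟩
    · intro a _; rfl
  rw [← hbij, Finset.sum_product, Finset.smul_sum]
  apply Finset.sum_congr rfl
  intro π hπ
  have hconst : ∀ y : (Fin m → Equiv.Perm (Fin k)) × Equiv.Perm (Fin m),
      Tterm m k f (τ * (π * hAct y.1 y.2)) = Tterm m k f (τ * π) := by
    intro y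
    rw [← mul_assoc]
    exact Tterm_hAct hk hk0 hskew (τ * π) y.1 y.2
  rw [Finset.sum_congr rfl (fun y _ => hconst y), Finset.sum_const, Finset.card_univ]

lemma hyperPfPoly_alternating (hk : Even k) (hk0 : 0 < k) {f : MvPolynomial (Fin k) R}
    [IsDomain R] [CharZero R]
    (hskew : IsSkewPoly f) (τ : Equiv.Perm (Fin (m * k))) :
    MvPolynomial.rename ⇑τ (hyperPfPoly m k f) =
      ((Equiv.Perm.sign τ : ℤˣ) : ℤ) • hyperPfPoly m k f := by
  classical
  set Nc := Fintype.card ((Fin m → Equiv.Perm (Fin k)) × Equiv.Perm (Fin m)) with hNcdef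
  have hren : MvPolynomial.rename ⇑τ (hyperPfPoly m k f) =
      ((Equiv.Perm.sign τ : ℤˣ) : ℤ) •
        ∑ π ∈ Finset.univ.filter (IsPartRep m k), Tterm m k f (τ * π) := by
    rw [hyperPfPoly_eq_sum, map_sum, Finset.smul_sum]
    apply Finset.sum_congr rfl
    intro π hπ
    unfold Tterm Fterm
    rw [map_zsmul, map_prod]
    have hterm : ∀ i : Fin m,
        MvPolynomial.rename ⇑τ (MvPolynomial.rename (fun j => π (bpos m k i j)) f) =
          MvPolynomial.rename (fun j => (τ * π) (bpos m k i j)) f := by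
      intro i
      rw [MvPolynomial.rename_rename]
      rfl
    rw [Finset.prod_congr rfl (fun i _ => hterm i)]
    rw [smul_smul]
    congr 1
    have := congrArg (fun u : ℤˣ => ((u : ℤˣ) : ℤ)) (map_mul Equiv.Perm.sign τ π)
    simp only [Units.val_mul] at this
    rw [show ((Equiv.Perm.sign π : ℤˣ) : ℤ) =
      ((Equiv.Perm.sign τ : ℤˣ) : ℤ) * (((Equiv.Perm.sign τ : ℤˣ) : ℤ) *
        ((Equiv.Perm.sign π : ℤˣ) : ℤ)) from by
      rw [← mul_assoc]
      have hsq := congrArg (Units.val) (Int.units_mul_self (Equiv.Perm.sign τ))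
      simp only [Units.val_mul, Units.val_one] at hsq
      rw [hsq, one_mul]]
    rw [← this]
  have hNc : (Nc : ℕ) ≠ 0 := Fintype.card_ne_zero
  have hmain : Nc • (∑ π ∈ Finset.univ.filter (IsPartRep m k), Tterm m k f (τ * π)) =
      Nc • hyperPfPoly m k f := by
    calc Nc • (∑ π ∈ Finset.univ.filter (IsPartRep m k), Tterm m k f (τ * π))
        = ∑ σ : Equiv.Perm (Fin (m * k)), Tterm m k f (τ * σ) :=
          (sum_coset hk hk0 hskew τ).symm
      _ = ∑ σ : Equiv.Perm (Fin (m * k)), Tterm m k f σ :=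
          Equiv.sum_comp (Equiv.mulLeft τ) (Tterm m k f)
      _ = ∑ σ : Equiv.Perm (Fin (m * k)), Tterm m k f (1 * σ) := by
          simp only [one_mul]
      _ = Nc • ∑ π ∈ Finset.univ.filter (IsPartRep m k), Tterm m k f (1 * π) :=
          sum_coset hk hk0 hskew 1
      _ = Nc • hyperPfPoly m k f := by
          simp only [one_mul]
          rw [hyperPfPoly_eq_sum]
  apply mul_left_cancel₀
    (show ((Nc : ℕ) : MvPolynomial (Fin (m * k)) R) ≠ 0 from Nat.cast_ne_zero.mpr hNc)
  rw [← nsmul_eq_mul, ← nsmul_eq_mul, hren, smul_comm (Nc : ℕ) ((Equiv.Perm.sign τ : ℤˣ) : ℤ),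
    hmain, smul_comm]

lemma hyperPfPoly_update_eq_zero (hk : Even k) {f : MvPolynomial (Fin k) R}
    [IsDomain R] [CharZero R] (hskew : IsSkewPoly f)
    (i j : Fin (m * k)) (hij : i ≠ j) :
    MvPolynomial.rename (Function.update id j i) (hyperPfPoly m k f) = 0 := by
  have hk0 : 0 < k := by
    rcases Nat.eq_zero_or_pos k with h | h
    · exfalso; subst h; exact absurd i.isLt (by simp)
    · exact h
  have halt := hyperPfPoly_alternating hk hk0 hskew (Equiv.swap i j)
  rw [Equiv.Perm.sign_swap hij] at halt
  have hneg : MvPolynomial.rename ⇑(Equiv.swap i j) (hyperPfPoly m k f) =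
      - hyperPfPoly m k f := by
    rw [halt]
    norm_num
  have hcomp : (Function.update (id : Fin (m * k) → Fin (m * k)) j i) ∘ ⇑(Equiv.swap i j) =
      Function.update (id : Fin (m * k) → Fin (m * k)) j i := by
    funext x
    simp only [Function.comp_apply, Function.update_apply, id_eq]
    by_cases hxi : x = i
    · subst hxi
      rw [Equiv.swap_apply_left]
      simp [hij.symm]
    · by_cases hxj : x = j
      · subst hxj
        rw [Equiv.swap_apply_right]
        simp [hij, hij.symm]
      · rw [Equiv.swap_apply_of_ne_of_ne hxi hxj]
  have h2 : MvPolynomial.rename (Function.update (id : Fin (m * k) → Fin (m * k)) j i)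
      (MvPolynomial.rename ⇑(Equiv.swap i j) (hyperPfPoly m k f)) =
      MvPolynomial.rename (Function.update (id : Fin (m * k) → Fin (m * k)) j i)
        (hyperPfPoly m k f) := by
    rw [MvPolynomial.rename_rename, hcomp]
  rw [hneg, map_neg] at h2
  set P := MvPolynomial.rename (Function.update (id : Fin (m * k) → Fin (m * k)) j i)
    (hyperPfPoly m k f) with hPdef
  have h3 : (2 : MvPolynomial (Fin (m * k)) R) * P = 0 := by
    have hPP : P + P = 0 := by
      nth_rewrite 1 [← h2]
      exact neg_add_cancel P
    rw [two_mul]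
    exact hPP
  have h2ne : (2 : MvPolynomial (Fin (m * k)) R) ≠ 0 := by
    have h' : ((2 : ℕ) : MvPolynomial (Fin (m * k)) R) ≠ 0 :=
      Nat.cast_ne_zero.mpr (by norm_num)
    simpa using h'
  exact (mul_eq_zero.mp h3).resolve_left h2ne

end SumLemma
section Vandermonde

variable {N : ℕ} {R : Type*} [CommRing R]

lemma X_sub_X_dvd_sub_rename (i j : Fin N) (P : MvPolynomial (Fin N) R) :
    (MvPolynomial.X j - MvPolynomial.X i) ∣
      (P - MvPolynomial.rename (Function.update id j i) P) := by
  induction P using MvPolynomial.induction_on with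
  | C a =>
    rw [MvPolynomial.rename_C, sub_self]
    exact dvd_zero _
  | add p q hp hq =>
    rw [map_add]
    have : p + q - (MvPolynomial.rename (Function.update id j i) p +
        MvPolynomial.rename (Function.update id j i) q) =
      (p - MvPolynomial.rename (Function.update id j i) p) +
        (q - MvPolynomial.rename (Function.update id j i) q) := by ring
    rw [this]
    exact dvd_add hp hq
  | mul_X p t hp =>
    rw [map_mul, MvPolynomial.rename_X]
    have hsplit : p * MvPolynomial.X t -
        MvPolynomial.rename (Function.update id j i) p *
          MvPolynomial.X (Function.update id j i t) =
        (p - MvPolynomial.rename (Function.update id j i) p) * MvPolynomial.X t +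
          MvPolynomial.rename (Function.update id j i) p *
            (MvPolynomial.X t - MvPolynomial.X (Function.update id j i t)) := by ring
    rw [hsplit]
    apply dvd_add
    · exact hp.mul_right _
    · by_cases htj : t = j
      · subst htj
        rw [Function.update_self]
        exact Dvd.dvd.mul_left dvd_rfl _
      · rw [Function.update_of_ne htj]
        simp only [id_eq, sub_self, mul_zero]
        exact dvd_zero _

lemma prime_X_mv [IsDomain R] (b : Fin N) :
    Prime (MvPolynomial.X b : MvPolynomial (Fin N) R) := by
  classical
  have hXb : (MvPolynomial.X b : MvPolynomial (Fin N) R) =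
      MvPolynomial.rename (Subtype.val : ({b} : Set (Fin N)) → Fin N)
        (MvPolynomial.X ⟨b, rfl⟩) := by
    rw [MvPolynomial.rename_X]
  rw [hXb, MvPolynomial.prime_rename_iff]
  haveI : Unique (({b} : Set (Fin N)) : Type _) := Set.uniqueSingleton b
  let e : MvPolynomial (({b} : Set (Fin N)) : Type _) R ≃ₐ[R] Polynomial R :=
    (MvPolynomial.renameEquiv R (Equiv.equivPUnit.{_, 1} _)).trans
      (MvPolynomial.pUnitAlgEquiv R)
  rw [← MulEquiv.prime_iff e.toMulEquiv]
  have he : e (MvPolynomial.X ⟨b, rfl⟩) = Polynomial.X := by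
    simp [e, MvPolynomial.renameEquiv_apply]
  rw [show e.toMulEquiv (MvPolynomial.X ⟨b, rfl⟩) = Polynomial.X from he]
  exact Polynomial.prime_X

lemma prime_X_sub_X [IsDomain R] {i j : Fin N} (hij : i ≠ j) :
    Prime (MvPolynomial.X j - MvPolynomial.X i : MvPolynomial (Fin N) R) := by
  classical
  let u : Fin N → MvPolynomial (Fin N) R :=
    fun t => if t = j then MvPolynomial.X j - MvPolynomial.X i else MvPolynomial.X t
  let v : Fin N → MvPolynomial (Fin N) R :=
    fun t => if t = j then MvPolynomial.X j + MvPolynomial.X i else MvPolynomial.X t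
  let φ : MvPolynomial (Fin N) R →ₐ[R] MvPolynomial (Fin N) R := MvPolynomial.aeval u
  let ψ : MvPolynomial (Fin N) R →ₐ[R] MvPolynomial (Fin N) R := MvPolynomial.aeval v
  have hφψ : φ.comp ψ = AlgHom.id R (MvPolynomial (Fin N) R) := by
    apply MvPolynomial.algHom_ext
    intro t
    by_cases htj : t = j
    · subst htj
      simp [φ, ψ, u, v, MvPolynomial.aeval_X, if_pos, hij.symm]
      rw [if_neg hij]
      ring
    · simp [φ, ψ, u, v, MvPolynomial.aeval_X, htj]
  have hψφ : ψ.comp φ = AlgHom.id R (MvPolynomial (Fin N) R) := by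
    apply MvPolynomial.algHom_ext
    intro t
    by_cases htj : t = j
    · subst htj
      simp [φ, ψ, u, v, MvPolynomial.aeval_X, if_pos, hij.symm]
      rw [if_neg hij]
      ring
    · simp [φ, ψ, u, v, MvPolynomial.aeval_X, htj]
  let e : MvPolynomial (Fin N) R ≃ₐ[R] MvPolynomial (Fin N) R :=
    AlgEquiv.ofAlgHom φ ψ hφψ hψφ
  have he : e (MvPolynomial.X j) = MvPolynomial.X j - MvPolynomial.X i := by
    show φ (MvPolynomial.X j) = _
    simp [φ, u, MvPolynomial.aeval_X]
  rw [← he]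
  rw [show e (MvPolynomial.X j) = e.toMulEquiv (MvPolynomial.X j) from rfl,
    MulEquiv.prime_iff e.toMulEquiv]
  exact prime_X_mv j

lemma not_dvd_X_sub_X [IsDomain R] {p q : Fin N × Fin N}
    (hp : p.1 < p.2) (hq : q.1 < q.2) (hne : p ≠ q) :
    ¬ ((MvPolynomial.X p.2 - MvPolynomial.X p.1 : MvPolynomial (Fin N) R) ∣
      (MvPolynomial.X q.2 - MvPolynomial.X q.1)) := by
  intro hdvd
  have hmap := map_dvd (MvPolynomial.rename (Function.update id p.2 p.1)) hdvd
  have hz : MvPolynomial.rename (Function.update id p.2 p.1)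
      (MvPolynomial.X p.2 - MvPolynomial.X p.1 : MvPolynomial (Fin N) R) = 0 := by
    rw [map_sub, MvPolynomial.rename_X, MvPolynomial.rename_X, Function.update_self,
      Function.update_of_ne (ne_of_lt hp), id_eq, sub_self]
  rw [hz, zero_dvd_iff, map_sub, MvPolynomial.rename_X, MvPolynomial.rename_X,
    sub_eq_zero] at hmap
  have heq : Function.update (id : Fin N → Fin N) p.2 p.1 q.2 =
      Function.update (id : Fin N → Fin N) p.2 p.1 q.1 :=
    MvPolynomial.X_injective hmap
  simp only [Function.update_apply, id_eq] at heq
  by_cases h2 : q.2 = p.2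
  · by_cases h1 : q.1 = p.2
    · exact absurd (h1 ▸ h2.symm) (ne_of_lt hq)
    · rw [if_pos h2, if_neg h1] at heq
      apply hne
      ext
      · exact congrArg Fin.val heq
      · exact congrArg Fin.val h2.symm
  · by_cases h1 : q.1 = p.2
    · rw [if_neg h2, if_pos h1] at heq
      -- q.2 = p.1, but p.1 < p.2 = q.1 < q.2 = p.1
      have : (p.1 : ℕ) < (p.1 : ℕ) := by
        have ha : (p.1 : ℕ) < (p.2 : ℕ) := hp
        have hb : (q.1 : ℕ) < (q.2 : ℕ) := hq
        have hc : (q.1 : ℕ) = (p.2 : ℕ) := congrArg Fin.val h1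
        have hd : (q.2 : ℕ) = (p.1 : ℕ) := congrArg Fin.val heq
        omega
      omega
    · rw [if_neg h2, if_neg h1] at heq
      exact (ne_of_lt hq) heq.symm

lemma vand_dvd_of_rename_eq_zero [IsDomain R] (P : MvPolynomial (Fin N) R)
    (h : ∀ i j : Fin N, i ≠ j →
      MvPolynomial.rename (Function.update id j i) P = 0) :
    vand N R ∣ P := by
  classical
  have hdvd : ∀ pq ∈ Finset.univ.filter (fun p : Fin N × Fin N => p.1 < p.2),
      (MvPolynomial.X pq.2 - MvPolynomial.X pq.1 : MvPolynomial (Fin N) R) ∣ P := by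
    intro pq hpq
    have hlt : pq.1 < pq.2 := (Finset.mem_filter.mp hpq).2
    have hd := X_sub_X_dvd_sub_rename pq.1 pq.2 P
    rw [h pq.1 pq.2 (ne_of_lt hlt), sub_zero] at hd
    exact hd
  have key : ∀ S : Finset (Fin N × Fin N),
      S ⊆ Finset.univ.filter (fun p : Fin N × Fin N => p.1 < p.2) →
      (∏ pq ∈ S, (MvPolynomial.X pq.2 - MvPolynomial.X pq.1 :
        MvPolynomial (Fin N) R)) ∣ P := by
    intro S
    induction S using Finset.induction_on with
    | empty => intro _; simp
    | insert a S ha ih =>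
      intro hsub
      have hS : S ⊆ Finset.univ.filter (fun p : Fin N × Fin N => p.1 < p.2) :=
        fun x hx => hsub (Finset.mem_insert_of_mem hx)
      have ha' : a ∈ Finset.univ.filter (fun p : Fin N × Fin N => p.1 < p.2) :=
        hsub (Finset.mem_insert_self a S)
      have halt : a.1 < a.2 := (Finset.mem_filter.mp ha').2
      obtain ⟨Q, hQ⟩ := ih hS
      have hprime : Prime (MvPolynomial.X a.2 - MvPolynomial.X a.1 :
          MvPolynomial (Fin N) R) := prime_X_sub_X (ne_of_lt halt)
      have hPa : (MvPolynomial.X a.2 - MvPolynomial.X a.1 :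
          MvPolynomial (Fin N) R) ∣ P := hdvd a ha'
      rw [hQ] at hPa
      have hnd : ¬ ((MvPolynomial.X a.2 - MvPolynomial.X a.1 : MvPolynomial (Fin N) R) ∣
          ∏ pq ∈ S, (MvPolynomial.X pq.2 - MvPolynomial.X pq.1 :
            MvPolynomial (Fin N) R)) := by
        intro hcon
        rw [Prime.dvd_finset_prod_iff hprime] at hcon
        obtain ⟨q, hqS, hqdvd⟩ := hcon
        have hqlt : q.1 < q.2 := (Finset.mem_filter.mp (hS hqS)).2
        exact not_dvd_X_sub_X halt hqlt (by rintro rfl; exact ha hqS) hqdvd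
      rcases hprime.dvd_mul.mp hPa with hc | hc
      · exact absurd hc hnd
      · obtain ⟨Q', hQ'⟩ := hc
        refine ⟨Q', ?_⟩
        rw [hQ, hQ', Finset.prod_insert ha]
        ring
  have := key (Finset.univ.filter (fun p : Fin N × Fin N => p.1 < p.2))
    (le_refl _)
  rw [vand]
  exact this

end Vandermonde
end
theorem stmt15 (m k : ℕ) (hk : Even k) (R : Type*) [CommRing R] [IsDomain R]
    [CharZero R] (f : MvPolynomial (Fin k) R) (hskew : IsSkewPoly f) :
    (∀ i j : Fin (m * k), i ≠ j →
      MvPolynomial.rename (Function.update id j i) (hyperPfPoly m k f) = 0) ∧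
    vand (m * k) R ∣ hyperPfPoly m k f := by
  constructor
  · intro i j hij
    exact hyperPfPoly_update_eq_zero hk hskew i j hij
  · exact vand_dvd_of_rename_eq_zero (hyperPfPoly m k f)
      (fun i j hij => hyperPfPoly_update_eq_zero hk hskew i j hij)
end
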